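/- LPO * LPO is not continuously Weihrauch reducible to LPO, i.e., LPO * LPO ≤*_W LPO fails. -/

import Mathlib

/-- Baire space. -/
abbrev Baire := ℕ → ℕ

/-- A problem: a partial multivalued function on Baire space, given as the
solution-set map; the domain is the set of instances with nonempty solution set. -/
def Problem := Baire → Set Baire

/-- Domain of a problem. -/
def Dom (f : Problem) : Set Baire := {x | (f x).Nonempty}

/-- A standard computable pairing of two sequences (interleaving). -/
def pair (x y : Baire) : Baire := fun n => if n % 2 = 0 then x (n / 2) else y (n / 2)

/-- Initial segment of length `m` of a sequence. -/
def initSeg (x : Baire) (m : ℕ) : List ℕ := (List.range m).map x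

/-- `F` is (the restriction to `D` of) a partial computable function on Baire space:
there is a computable monotone oracle functional computing `F x` from prefixes of `x`,
correctly and consistently, for every `x ∈ D`. -/
def ComputableOn (F : Baire → Baire) (D : Set Baire) : Prop :=
  ∃ φ : List ℕ → ℕ → Option ℕ, Computable₂ φ ∧
    ∀ x ∈ D, ∀ n : ℕ,
      (∃ m, φ (initSeg x m) n = some (F x n)) ∧
      (∀ m v, φ (initSeg x m) n = some v → v = F x n)

/-- Weihrauch reducibility `f ≤_W g`, with the partial computable forward functional `k`
defined on `Dom f` and the partial computable backward functional `h` defined on all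
pairs `⟨x, y⟩` with `x ∈ Dom f` and `y` a `g`-solution of `k x`. -/
def WRed (f g : Problem) : Prop :=
  ∃ h k : Baire → Baire,
    ComputableOn k (Dom f) ∧
    ComputableOn h {p | ∃ x ∈ Dom f, ∃ y ∈ g (k x), p = pair x y} ∧
    ∀ x ∈ Dom f, k x ∈ Dom g ∧ ∀ y ∈ g (k x), h (pair x y) ∈ f x

/-- Weihrauch equivalence. -/
def WEquiv (f g : Problem) : Prop := WRed f g ∧ WRed g f

/-- Continuous Weihrauch reducibility `f ≤*_W g`: as `WRed` but the functionals
need only be partial continuous (continuous on their domains, Baire space carrying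
the product topology). -/
def ContWRed (f g : Problem) : Prop :=
  ∃ h k : Baire → Baire,
    ContinuousOn k (Dom f) ∧
    ContinuousOn h {p | ∃ x ∈ Dom f, ∃ y ∈ g (k x), p = pair x y} ∧
    ∀ x ∈ Dom f, k x ∈ Dom g ∧ ∀ y ∈ g (k x), h (pair x y) ∈ f x

/-- Continuous Weihrauch equivalence. -/
def ContWEquiv (f g : Problem) : Prop := ContWRed f g ∧ ContWRed g f

/-- Composition of problems: `dom (f ∘ g) = {x ∈ dom g : g x ⊆ dom f}` and
`(f ∘ g) x = {z : ∃ y ∈ g x, z ∈ f y}`. -/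
def pcomp (f g : Problem) : Problem :=
  fun x => {z | g x ⊆ Dom f ∧ ∃ y ∈ g x, z ∈ f y}

/-- The identity problem. -/
def idp : Problem := fun x => {x}

/-- `p` is (a representative of) the compositional product `f * g`: the maximum,
with respect to `≤_W`, of `{f' ∘ g' : f' ≤_W f, g' ≤_W g}`. -/
def IsCompProd (f g p : Problem) : Prop :=
  (∃ f' g', WRed f' f ∧ WRed g' g ∧ WEquiv p (pcomp f' g')) ∧
  (∀ f' g', WRed f' f → WRed g' g → WRed (pcomp f' g') p)

/-- `IsIter f n p` : `p` is (a representative of) `f^[n]`, the compositional product of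
`n` copies of `f`, with `f^[0] := id`. -/
def IsIter (f : Problem) : ℕ → Problem → Prop
  | 0, p => p = idp
  | n + 1, p => ∃ q, IsIter f n q ∧ IsCompProd f q p

/-- The constant sequence with value `n`. -/
def cseq (n : ℕ) : Baire := fun _ => n

/-- The limited principle of omniscience. -/
def LPO : Problem := fun x =>
  {y | ((∃ n, x n = 0) ∧ y = cseq 0) ∨ ((∀ n, x n ≠ 0) ∧ y = cseq 1)}

/-- The lesser limited principle of omniscience. -/
def LLPO : Problem := fun x =>
  {y | (∀ i j, x i ≠ 0 → x j ≠ 0 → i = j) ∧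
       ((y = cseq 0 ∧ ∀ i, Even i → x i = 0) ∨
        (y = cseq 1 ∧ ∀ i, Odd i → x i = 0))}

/-- Turing reducibility between points of Baire space: `x` is computable from
oracle `y`. -/
def TuringLE (x y : Baire) : Prop :=
  ∃ φ : List ℕ → ℕ → Option ℕ, Computable₂ φ ∧
    ∀ n : ℕ, (∃ m, φ (initSeg y m) n = some (x n)) ∧
      (∀ m v, φ (initSeg y m) n = some v → v = x n)

/-- Mutual Turing reducibility: `x` and `y` have the same Turing degree. -/
def TuringEquiv (x y : Baire) : Prop := TuringLE x y ∧ TuringLE y x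

/-- Strict Turing reducibility. -/
def TuringLT (x y : Baire) : Prop := TuringLE x y ∧ ¬ TuringLE y x

/-- The problem `w_a`, for `a` a representative of a (non-zero) Turing degree. -/
def w (a : Baire) : Problem := fun x =>
  {y | (Computable x ∧ ¬ Computable y) ∨ (¬ Computable x ∧ TuringEquiv y a)}

/-- `k`-weak continuity of a problem. -/
def WeaklyContinuous (k : ℕ) (f : Problem) : Prop :=
  ∀ x ∈ Dom f, ∀ y : ℕ → Baire, (∀ n, y n ∈ Dom f) →
    Filter.Tendsto y Filter.atTop (nhds x) →
    ∃ u ∈ f x, ∀ l < k, ∀ m : ℕ, ∃ n ≥ m,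
      ∃ v ∈ f (y (n * k + l)), initSeg u m = initSeg v m

/-- Product of two problems. -/
def prodP (f g : Problem) : Problem := fun z =>
  {w | ∃ x y u v, z = pair x y ∧ w = pair u v ∧ u ∈ f x ∧ v ∈ g y}

/-- `powP f n` : the product of `n` copies of `f` (for `n ≥ 1`). -/
def powP (f : Problem) : ℕ → Problem
  | 0 => idp
  | 1 => f
  | n + 2 => prodP f (powP f (n + 1))

/-- A problem `f` is `k`-continuous: it has a realizer `r` (defined on a domain
`D ⊇ Dom f`) together with a partition of `D` into at most `k` pieces (given by a
coloring `c`) such that `r` is continuous on each piece. -/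
def kContinuous (k : ℕ) (f : Problem) : Prop :=
  ∃ (D : Set Baire) (r : Baire → Baire) (c : Baire → Fin k),
    Dom f ⊆ D ∧ (∀ x ∈ Dom f, r x ∈ f x) ∧
    ∀ i : Fin k, ContinuousOn r {x ∈ D | c x = i}


-- auxiliary
def ev (z : Baire) : Baire := fun n => z (2 * n)
def od (z : Baire) : Baire := fun n => z (2 * n + 1)

lemma ev_pair (x y : Baire) : ev (pair x y) = x := by
  funext n
  show (if (2 * n) % 2 = 0 then x ((2 * n) / 2) else y ((2 * n) / 2)) = x n
  rw [if_pos (by omega)]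
  congr 1
  omega

lemma od_pair (x y : Baire) : od (pair x y) = y := by
  funext n
  show (if (2 * n + 1) % 2 = 0 then x _ else y ((2 * n + 1) / 2)) = y n
  rw [if_neg (by omega)]
  congr 1
  omega

open Classical in
noncomputable def lpoval (x : Baire) : Baire := if ∃ n, x n = 0 then cseq 0 else cseq 1

lemma lpoval_of_zero {x : Baire} (h : ∃ n, x n = 0) : lpoval x = cseq 0 := if_pos h

lemma lpoval_of_ne {x : Baire} (h : ∀ n, x n ≠ 0) : lpoval x = cseq 1 :=
  if_neg (fun ⟨n, hn⟩ => h n hn)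

lemma LPO_eq (x : Baire) : LPO x = {lpoval x} := by
  ext y
  simp only [LPO, Set.mem_setOf_eq, Set.mem_singleton_iff]
  by_cases h : ∃ n, x n = 0
  · rw [lpoval_of_zero h]
    constructor
    · rintro (⟨-, rfl⟩ | ⟨hn, -⟩)
      · rfl
      · exact absurd h (not_exists.mpr hn)
    · rintro rfl; exact Or.inl ⟨h, rfl⟩
  · have h' : ∀ n, x n ≠ 0 := not_exists.mp h
    rw [lpoval_of_ne h']
    constructor
    · rintro (⟨hz, -⟩ | ⟨-, rfl⟩)
      · exact absurd hz h
      · rfl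
    · rintro rfl; exact Or.inr ⟨h', rfl⟩

lemma Dom_LPO : Dom LPO = Set.univ := by
  ext x
  simp only [Dom, Set.mem_setOf_eq, Set.mem_univ, iff_true]
  exact ⟨lpoval x, by rw [LPO_eq]; rfl⟩

-- modulus of continuity
lemma modulus {F : Baire → Baire} {S : Set Baire} {w0 : Baire}
    (hF : ContinuousWithinAt F S w0) (n : ℕ) :
    ∃ M, ∀ w ∈ S, (∀ i < M, w i = w0 i) → F w n = F w0 n := by
  have h1 : ContinuousWithinAt (fun z => F z n) S w0 :=
    (continuous_apply n).continuousAt.comp_continuousWithinAt hF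
  have h2 : {F w0 n} ∈ nhds (F w0 n) := by
    exact (isOpen_discrete _).mem_nhds rfl
  have h3 := h1 h2
  rw [Filter.mem_map, mem_nhdsWithin] at h3
  obtain ⟨U, hUo, hU0, hUsub⟩ := h3
  obtain ⟨I, u, hIu, hpi⟩ := isOpen_pi_iff.1 hUo w0 hU0
  refine ⟨(I.sup id) + 1, fun w hw hagree => ?_⟩
  have hwU : w ∈ U := by
    apply hpi
    intro i hi
    have : w i = w0 i := hagree i (Nat.lt_succ_of_le (Finset.le_sup (f := id) hi))
    rw [this]
    exact (hIu i hi).2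
  exact hUsub ⟨hwU, hw⟩

lemma ComputableOn.continuousOn {F : Baire → Baire} {D : Set Baire}
    (h : ComputableOn F D) : ContinuousOn F D := by
  obtain ⟨φ, -, hφ⟩ := h
  intro x hx
  rw [continuousWithinAt_pi]
  intro n
  obtain ⟨⟨m, hm⟩, -⟩ := hφ x hx n
  have hev : ∀ᶠ z in nhdsWithin x D, F z n = F x n := by
    have hUo : IsOpen {z : Baire | ∀ i < m, z i = x i} := by
      have : {z : Baire | ∀ i < m, z i = x i}
          = ⋂ i ∈ Finset.range m, (fun z : Baire => z i) ⁻¹' {x i} := by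
        ext z; simp [Finset.mem_range]
      rw [this]
      exact isOpen_biInter_finset fun i _ =>
        (isOpen_discrete _).preimage (continuous_apply i)
    have hU : {z : Baire | ∀ i < m, z i = x i} ∈ nhds x :=
      hUo.mem_nhds (fun i _ => rfl)
    filter_upwards [mem_nhdsWithin_of_mem_nhds hU, self_mem_nhdsWithin] with z hz hzD
    have hseg : initSeg z m = initSeg x m := by
      unfold initSeg
      apply List.map_congr_left
      intro a ha
      exact hz a (List.mem_range.mp ha)
    have := (hφ z hzD n).2 m (F x n) (by rw [hseg]; exact hm)
    exact this.symm
  exact Filter.Tendsto.congr' (hev.mono fun z h => h.symm) tendsto_const_nhds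

lemma continuous_ev : Continuous ev := continuous_pi fun n => continuous_apply _
lemma continuous_od : Continuous od := continuous_pi fun n => continuous_apply _

lemma contOn_pair {F G : Baire → Baire} {s : Set Baire}
    (hF : ContinuousOn F s) (hG : ContinuousOn G s) :
    ContinuousOn (fun w => pair (F w) (G w)) s := by
  intro x hx
  rw [continuousWithinAt_pi]
  intro n
  show ContinuousWithinAt (fun w => if n % 2 = 0 then F w (n / 2) else G w (n / 2)) s x
  by_cases h : n % 2 = 0
  · simp only [h, if_true]
    exact (continuous_apply (n / 2)).continuousAt.comp_continuousWithinAt (hF x hx)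
  · simp only [h, if_false]
    exact (continuous_apply (n / 2)).continuousAt.comp_continuousWithinAt (hG x hx)

-- oracle functional of the "recoding" form
lemma computableOn_comp (e : ℕ → ℕ) (he : Computable e) (D : Set Baire) :
    ComputableOn (fun w n => w (e n)) D := by
  refine ⟨fun l n => l[e n]?, ?_, ?_⟩
  · exact Primrec.list_getElem?.to_comp.comp Computable.fst (he.comp Computable.snd)
  · intro x _ n
    constructor
    · refine ⟨e n + 1, ?_⟩
      show (List.map x (List.range (e n + 1)))[e n]? = some (x (e n))
      rw [List.getElem?_map, List.getElem?_range (Nat.lt_succ_self _)]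
      rfl
    · intro m v hv
      unfold initSeg at hv
      dsimp only at hv
      rw [List.getElem?_map] at hv
      by_cases hlt : e n < m
      · rw [List.getElem?_range hlt] at hv
        simpa using hv.symm
      · rw [List.getElem?_eq_none_iff.mpr (by simpa [List.length_range] using Nat.le_of_not_lt hlt)] at hv
        simp at hv

-- the two factor problems
def fP : Problem := fun z => {pair (ev z) (lpoval (od z))}
def gP : Problem := fun z => {pair (lpoval (ev z)) (od z)}

lemma Dom_fP : Dom fP = Set.univ :=
  Set.eq_univ_of_forall fun z => ⟨_, rfl⟩
lemma Dom_gP : Dom gP = Set.univ :=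
  Set.eq_univ_of_forall fun z => ⟨_, rfl⟩

lemma primrec_mod2 : PrimrecPred (fun n : ℕ => n % 2 = 0) :=
  PrimrecRel.comp Primrec.eq (Primrec.nat_mod.comp Primrec.id (Primrec.const 2)) (Primrec.const 0)

lemma wred_gP : WRed gP LPO := by
  refine ⟨fun w n => w (if n % 2 = 0 then n + 1 else 2 * n), fun w n => w (2 * n), ?_, ?_, ?_⟩
  · exact computableOn_comp _ Primrec.nat_double.to_comp _
  · exact computableOn_comp _
      ((Primrec.ite primrec_mod2 (Primrec.nat_add.comp Primrec.id (Primrec.const 1))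
        Primrec.nat_double).to_comp) _
  · intro x _
    refine ⟨by rw [Dom_LPO]; trivial, ?_⟩
    intro y hy
    rw [LPO_eq, Set.mem_singleton_iff] at hy
    subst hy
    refine Set.mem_singleton_iff.mpr ?_
    funext n
    show pair x (lpoval (ev x)) (if n % 2 = 0 then n + 1 else 2 * n)
        = pair (lpoval (ev x)) (od x) n
    unfold pair od
    by_cases hn : n % 2 = 0
    · rw [if_pos hn, if_pos hn, if_neg (show ¬(n + 1) % 2 = 0 by omega)]
      congr 1
      omega
    · rw [if_neg hn, if_neg hn, if_pos (show (2 * n) % 2 = 0 by omega)]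
      congr 1
      omega

lemma wred_fP : WRed fP LPO := by
  refine ⟨fun w n => w (if n % 2 = 0 then 2 * n else n), fun w n => w (2 * n + 1), ?_, ?_, ?_⟩
  · exact computableOn_comp _
      ((Primrec.nat_add.comp Primrec.nat_double (Primrec.const 1)).to_comp) _
  · exact computableOn_comp _
      ((Primrec.ite primrec_mod2 Primrec.nat_double Primrec.id).to_comp) _
  · intro x _
    refine ⟨by rw [Dom_LPO]; trivial, ?_⟩
    intro y hy
    rw [LPO_eq, Set.mem_singleton_iff] at hy
    subst hy
    refine Set.mem_singleton_iff.mpr ?_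
    funext n
    show pair x (lpoval (od x)) (if n % 2 = 0 then 2 * n else n)
        = pair (ev x) (lpoval (od x)) n
    unfold pair ev
    by_cases hn : n % 2 = 0
    · rw [if_pos hn, if_pos hn, if_pos (show (2 * n) % 2 = 0 by omega)]
      congr 1
      omega
    · rw [if_neg hn, if_neg hn, if_neg hn]

lemma pcomp_fg (z : Baire) :
    pcomp fP gP z = {pair (lpoval (ev z)) (lpoval (od z))} := by
  ext u
  simp only [pcomp, Set.mem_setOf_eq, Set.mem_singleton_iff]
  constructor
  · rintro ⟨-, y, hy, hu⟩
    rw [show y = pair (lpoval (ev z)) (od z) from hy] at hu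
    rw [show u = pair (ev (pair (lpoval (ev z)) (od z))) (lpoval (od (pair (lpoval (ev z)) (od z)))) from hu,
      ev_pair, od_pair]
  · rintro rfl
    refine ⟨fun y _ => ⟨_, rfl⟩, pair (lpoval (ev z)) (od z), rfl, ?_⟩
    show _ = pair (ev (pair (lpoval (ev z)) (od z))) (lpoval (od (pair (lpoval (ev z)) (od z))))
    rw [ev_pair, od_pair]

lemma wred_trans_contWRed {f g h : Problem} (h1 : WRed f g) (h2 : ContWRed g h) :
    ContWRed f h := by
  obtain ⟨h1b, k1, hk1c, hh1c, hcorr1⟩ := h1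
  obtain ⟨h2b, k2, hk2c, hh2c, hcorr2⟩ := h2
  have hk1 : ContinuousOn k1 (Dom f) := hk1c.continuousOn
  have hh1 : ContinuousOn h1b {p | ∃ x ∈ Dom f, ∃ y ∈ g (k1 x), p = pair x y} :=
    hh1c.continuousOn
  refine ⟨fun w => h1b (pair (ev w) (h2b (pair (k1 (ev w)) (od w)))),
          fun x => k2 (k1 x), ?_, ?_, ?_⟩
  · exact hk2c.comp hk1 (fun x hx => (hcorr1 x hx).1)
  · set DF := {p | ∃ x ∈ Dom f, ∃ y ∈ h (k2 (k1 x)), p = pair x y} with hDF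
    have hev' : ContinuousOn (fun w : Baire => ev w) DF := continuous_ev.continuousOn
    have hod' : ContinuousOn (fun w : Baire => od w) DF := continuous_od.continuousOn
    have hmap1 : Set.MapsTo (fun w : Baire => ev w) DF (Dom f) := by
      rintro w ⟨x, hx, y, hy, rfl⟩; dsimp only; rw [ev_pair]; exact hx
    have hG1 : ContinuousOn (fun w => k1 (ev w)) DF := hk1.comp hev' hmap1
    have hG2 : ContinuousOn (fun w => pair (k1 (ev w)) (od w)) DF := contOn_pair hG1 hod'
    have hmap2 : Set.MapsTo (fun w => pair (k1 (ev w)) (od w)) DF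
        {p | ∃ x ∈ Dom g, ∃ y ∈ h (k2 x), p = pair x y} := by
      rintro w ⟨x, hx, y, hy, rfl⟩
      dsimp only
      rw [ev_pair, od_pair]
      exact ⟨k1 x, (hcorr1 x hx).1, y, hy, rfl⟩
    have hG3 : ContinuousOn (fun w => h2b (pair (k1 (ev w)) (od w))) DF :=
      hh2c.comp hG2 hmap2
    have hG4 : ContinuousOn (fun w => pair (ev w) (h2b (pair (k1 (ev w)) (od w)))) DF :=
      contOn_pair hev' hG3
    have hmap3 : Set.MapsTo (fun w => pair (ev w) (h2b (pair (k1 (ev w)) (od w)))) DF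
        {p | ∃ x ∈ Dom f, ∃ y ∈ g (k1 x), p = pair x y} := by
      rintro w ⟨x, hx, y, hy, rfl⟩
      dsimp only
      rw [ev_pair, od_pair]
      exact ⟨x, hx, h2b (pair (k1 x) y), (hcorr2 (k1 x) (hcorr1 x hx).1).2 y hy, rfl⟩
    exact hh1.comp hG4 hmap3
  · intro x hx
    refine ⟨(hcorr2 (k1 x) (hcorr1 x hx).1).1, ?_⟩
    intro y hy
    have h6 := (hcorr2 (k1 x) (hcorr1 x hx).1).2 y hy
    have h5 := (hcorr1 x hx).2 _ h6
    simp only [ev_pair, od_pair]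
    exact h5

def xs (s : ℕ) : Baire := fun m => if m = s then 0 else 1

lemma pair_zero (u v : Baire) : pair u v 0 = u 0 := rfl

lemma pair_one (u v : Baire) : pair u v 1 = v 0 := rfl

lemma not_contW : ¬ ContWRed (pcomp fP gP) LPO := by
  rintro ⟨h, k, hk, hh, hcorr⟩
  have hdom : ∀ z : Baire, z ∈ Dom (pcomp fP gP) := by
    intro z; exact ⟨_, by rw [pcomp_fg]; rfl⟩
  have hval : ∀ z y, y ∈ LPO (k z) →
      h (pair z y) = pair (lpoval (ev z)) (lpoval (od z)) := by
    intro z y hy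
    have := (hcorr z (hdom z)).2 y hy
    rwa [pcomp_fg, Set.mem_singleton_iff] at this
  have hSmem : ∀ z y, y ∈ LPO (k z) →
      pair z y ∈ {p | ∃ x ∈ Dom (pcomp fP gP), ∃ y ∈ LPO (k x), p = pair x y} :=
    fun z y hy => ⟨z, hdom z, y, hy, rfl⟩
  set a : Baire := cseq 1 with ha
  have hlpa : lpoval (ev a) = cseq 1 := lpoval_of_ne (fun n => one_ne_zero)
  have hlpa' : lpoval (od a) = cseq 1 := lpoval_of_ne (fun n => one_ne_zero)
  -- general facts about the perturbed inputs
  have hz1 : ∀ s i, i ≠ 2 * s → pair (xs s) (cseq 1) i = 1 := by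
    intro s i hi
    show (if i % 2 = 0 then xs s (i / 2) else cseq 1 (i / 2)) = 1
    unfold xs cseq
    split_ifs <;> omega
  have hlpxs : ∀ s, lpoval (xs s) = cseq 0 :=
    fun s => lpoval_of_zero ⟨s, if_pos rfl⟩
  by_cases hza : ∃ q, k a q = 0
  · -- Case B : k a has a zero
    obtain ⟨q, hq⟩ := hza
    have hy0 : cseq 0 ∈ LPO (k a) := Or.inl ⟨⟨q, hq⟩, rfl⟩
    have hva : h (pair a (cseq 0)) = pair (cseq 1) (cseq 1) := by
      rw [hval a _ hy0, hlpa, hlpa']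
    obtain ⟨M0, hM0⟩ := modulus (hh _ (hSmem a _ hy0)) 0
    obtain ⟨Mk, hMk⟩ := modulus (hk a (hdom a)) q
    set s := M0 + Mk + 1 with hs
    set z : Baire := pair (xs s) (cseq 1) with hzdef
    have hkz : k z q = 0 := by
      rw [hMk z (hdom z) (fun i hi => hz1 s i (by omega))]; exact hq
    have hy1 : cseq 0 ∈ LPO (k z) := Or.inl ⟨⟨q, hkz⟩, rfl⟩
    have hvz : h (pair z (cseq 0)) = pair (cseq 0) (cseq 1) := by
      rw [hval z _ hy1, hzdef, ev_pair, od_pair, hlpxs,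
        lpoval_of_ne (x := cseq 1) fun n => one_ne_zero]
    have hag : ∀ i < M0, pair z (cseq 0) i = pair a (cseq 0) i := by
      intro i hi
      show (if i % 2 = 0 then z (i / 2) else cseq 0 (i / 2))
          = (if i % 2 = 0 then a (i / 2) else cseq 0 (i / 2))
      split_ifs with hc
      · exact hz1 s (i / 2) (by omega)
      · rfl
    have h1 := hM0 _ (hSmem z _ hy1) hag
    rw [hvz, hva, pair_zero, pair_zero] at h1
    simp [cseq] at h1
  · -- Case A : k a has no zero
    push_neg at hza
    have hy0 : cseq 1 ∈ LPO (k a) := Or.inr ⟨hza, rfl⟩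
    have hva : h (pair a (cseq 1)) = pair (cseq 1) (cseq 1) := by
      rw [hval a _ hy0, hlpa, hlpa']
    obtain ⟨M0, hM0⟩ := modulus (hh _ (hSmem a _ hy0)) 0
    set s := M0 + 1 with hs
    set z : Baire := pair (xs s) (cseq 1) with hzdef
    by_cases hzb : ∃ q, k z q = 0
    · -- k z has a zero: perturb the odd part
      obtain ⟨q, hq⟩ := hzb
      have hy1 : cseq 0 ∈ LPO (k z) := Or.inl ⟨⟨q, hq⟩, rfl⟩
      have hvz : h (pair z (cseq 0)) = pair (cseq 0) (cseq 1) := by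
        rw [hval z _ hy1, hzdef, ev_pair, od_pair, hlpxs,
          lpoval_of_ne (x := cseq 1) fun n => one_ne_zero]
      obtain ⟨M1, hM1⟩ := modulus (hh _ (hSmem z _ hy1)) 1
      obtain ⟨Mk, hMk⟩ := modulus (hk z (hdom z)) q
      set t := M1 + Mk + s + 1 with ht
      set z' : Baire := pair (xs s) (xs t) with hz'def
      have hzz' : ∀ i, i ≠ 2 * t + 1 → z' i = z i := by
        intro i hi
        show (if i % 2 = 0 then xs s (i / 2) else xs t (i / 2))
            = (if i % 2 = 0 then xs s (i / 2) else cseq 1 (i / 2))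
        split_ifs with hc
        · rfl
        · show xs t (i / 2) = 1
          unfold xs
          rw [if_neg (by omega)]
      have hkz' : k z' q = 0 := by
        rw [hMk z' (hdom z') (fun i hi => hzz' i (by omega))]; exact hq
      have hy2 : cseq 0 ∈ LPO (k z') := Or.inl ⟨⟨q, hkz'⟩, rfl⟩
      have hvz' : h (pair z' (cseq 0)) = pair (cseq 0) (cseq 0) := by
        rw [hval z' _ hy2, hz'def, ev_pair, od_pair, hlpxs, hlpxs]
      have hag : ∀ i < M1, pair z' (cseq 0) i = pair z (cseq 0) i := by
        intro i hi
        show (if i % 2 = 0 then z' (i / 2) else cseq 0 (i / 2))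
            = (if i % 2 = 0 then z (i / 2) else cseq 0 (i / 2))
        split_ifs with hc
        · exact hzz' (i / 2) (by omega)
        · rfl
      have h2 := hM1 _ (hSmem z' _ hy2) hag
      rw [hvz', hvz, pair_one, pair_one] at h2
      simp [cseq] at h2
    · -- k z has no zero
      push_neg at hzb
      have hy1 : cseq 1 ∈ LPO (k z) := Or.inr ⟨hzb, rfl⟩
      have hvz : h (pair z (cseq 1)) = pair (cseq 0) (cseq 1) := by
        rw [hval z _ hy1, hzdef, ev_pair, od_pair, hlpxs,
          lpoval_of_ne (x := cseq 1) fun n => one_ne_zero]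
      have hag : ∀ i < M0, pair z (cseq 1) i = pair a (cseq 1) i := by
        intro i hi
        show (if i % 2 = 0 then z (i / 2) else cseq 1 (i / 2))
            = (if i % 2 = 0 then a (i / 2) else cseq 1 (i / 2))
        split_ifs with hc
        · exact hz1 s (i / 2) (by omega)
        · rfl
      have h1 := hM0 _ (hSmem z _ hy1) hag
      rw [hvz, hva, pair_zero, pair_zero] at h1
      simp [cseq] at h1

/-- `LPO * LPO` is not continuously Weihrauch reducible to `LPO`. -/
theorem lpo_star_lpo_not_red_lpo (p : Problem) (hp : IsCompProd LPO LPO p) :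
    ¬ ContWRed p LPO := by
  intro hred
  exact not_contW (wred_trans_contWRed (hp.2 fP gP wred_fP wred_gP) hred)
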